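/- Let X^I, F_I (I = 0,…,n) be smooth ℂ-valued functions on a connected open set in ℂ^n satisfying the homogeneity relation F_I = X^J ∂F_I/∂X^J (first-degree homogeneity when F_I are viewed as functions of X), such that the matrix (∂_α X^I; X^I) is invertible, and the symplectic conditions hold: ∂_α X^I ∂_β X^J ∂_{[I} F_{J]} = 0 for all α,β, and X^I ∂_α F_I - F_I ∂_α X^I = 0 for all α (equivalently ∂_α X^I X^J ∂_{[I}F_{J]} = 0). Then ∂_{[I} F_{J]} = 0, and hence there exists locally a holomorphic function F(X) with F_I = ∂F/∂X^I. -/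

import Mathlib

open Matrix

/-- Lemma B.4: if `F_I(X)` are first-degree homogeneous, the matrix with rows `e_α = ∂_α X`
and `X` is invertible, and the symplectic contraction conditions hold, then
`∂_{[I}F_{J]} = 0`, and hence locally a prepotential `F` with `F_I = ∂_I F` exists. -/
theorem stmt15 {n : ℕ} (Udom : Set (Fin (n+1) → ℂ)) (hopen : IsOpen Udom)
    (hconn : IsConnected Udom)
    (F : Fin (n+1) → (Fin (n+1) → ℂ) → ℂ)
    (hdiff : ∀ I, DifferentiableOn ℂ (F I) Udom)
    (e : (Fin (n+1) → ℂ) → Fin n → (Fin (n+1) → ℂ))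
    (hhom : ∀ X ∈ Udom, ∀ I, F I X = ∑ J, X J * fderiv ℂ (F I) X (Pi.single J 1))
    (hinv : ∀ X ∈ Udom, IsUnit (Matrix.of fun (r I : Fin (n+1)) =>
        Fin.lastCases (motive := fun _ => ℂ) (X I) (fun α => e X α I) r).det)
    (hsymp1 : ∀ X ∈ Udom, ∀ α β : Fin n, ∑ I, ∑ J, e X α I * e X β J *
        (fderiv ℂ (F J) X (Pi.single I 1) - fderiv ℂ (F I) X (Pi.single J 1)) = 0)
    (hsymp2 : ∀ X ∈ Udom, ∀ α : Fin n, ∑ I, ∑ J, e X α I * X J *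
        (fderiv ℂ (F J) X (Pi.single I 1) - fderiv ℂ (F I) X (Pi.single J 1)) = 0) :
    (∀ X ∈ Udom, ∀ I J,
      fderiv ℂ (F J) X (Pi.single I 1) = fderiv ℂ (F I) X (Pi.single J 1)) ∧
    ∀ X₀ ∈ Udom, ∃ Vnb ∈ nhds X₀, ∃ Fpre : (Fin (n+1) → ℂ) → ℂ,
      ∀ X ∈ Vnb, ∀ I, fderiv ℂ Fpre X (Pi.single I 1) = F I X := by
  have key : ∀ X ∈ Udom, ∀ I J,
      fderiv ℂ (F J) X (Pi.single I 1) = fderiv ℂ (F I) X (Pi.single J 1) := by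
    intro X hX
    set A : Matrix (Fin (n+1)) (Fin (n+1)) ℂ := Matrix.of fun I J =>
      fderiv ℂ (F J) X (Pi.single I 1) - fderiv ℂ (F I) X (Pi.single J 1) with hA
    set M : Matrix (Fin (n+1)) (Fin (n+1)) ℂ := Matrix.of fun (r I : Fin (n+1)) =>
      Fin.lastCases (motive := fun _ => ℂ) (X I) (fun α => e X α I) r with hM
    have hzero : ∀ r s, ∑ I, ∑ J, M r I * M s J * A I J = 0 := by
      intro r s
      induction r using Fin.lastCases with
      | last =>
        induction s using Fin.lastCases with
        | last =>
          have hs : (∑ I, ∑ J, M (Fin.last n) I * M (Fin.last n) J * A I J)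
              = -(∑ I, ∑ J, M (Fin.last n) I * M (Fin.last n) J * A I J) := by
            conv_lhs => rw [Finset.sum_comm]
            rw [← Finset.sum_neg_distrib]
            refine Finset.sum_congr rfl fun I _ => ?_
            rw [← Finset.sum_neg_distrib]
            refine Finset.sum_congr rfl fun J _ => ?_
            simp only [hA, Matrix.of_apply]
            ring
          linear_combination hs / 2
        | cast β =>
          have h2 := hsymp2 X hX β
          have heq : (∑ I, ∑ J, M (Fin.last n) I * M β.castSucc J * A I J)
              = -(∑ I, ∑ J, e X β I * X J *
                (fderiv ℂ (F J) X (Pi.single I 1) - fderiv ℂ (F I) X (Pi.single J 1))) := by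
            rw [Finset.sum_comm, ← Finset.sum_neg_distrib]
            refine Finset.sum_congr rfl fun I _ => ?_
            rw [← Finset.sum_neg_distrib]
            refine Finset.sum_congr rfl fun J _ => ?_
            simp only [hA, hM, Matrix.of_apply, Fin.lastCases_last, Fin.lastCases_castSucc]
            ring
          rw [heq, h2, neg_zero]
      | cast α =>
        induction s using Fin.lastCases with
        | last =>
          have h2 := hsymp2 X hX α
          calc ∑ I, ∑ J, M α.castSucc I * M (Fin.last n) J * A I J
              = ∑ I, ∑ J, e X α I * X J *
                (fderiv ℂ (F J) X (Pi.single I 1) - fderiv ℂ (F I) X (Pi.single J 1)) := by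
                refine Finset.sum_congr rfl fun I _ => Finset.sum_congr rfl fun J _ => ?_
                simp only [hA, hM, Matrix.of_apply, Fin.lastCases_last, Fin.lastCases_castSucc]
            _ = 0 := h2
        | cast β =>
          have h1 := hsymp1 X hX α β
          calc ∑ I, ∑ J, M α.castSucc I * M β.castSucc J * A I J
              = ∑ I, ∑ J, e X α I * e X β J *
                (fderiv ℂ (F J) X (Pi.single I 1) - fderiv ℂ (F I) X (Pi.single J 1)) := by
                refine Finset.sum_congr rfl fun I _ => Finset.sum_congr rfl fun J _ => ?_
                simp only [hA, hM, Matrix.of_apply, Fin.lastCases_castSucc]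
            _ = 0 := h1
    have hMAMt : M * A * Mᵀ = 0 := by
      ext r s
      have : (M * A * Mᵀ) r s = ∑ I, ∑ J, M r I * M s J * A I J := by
        simp only [Matrix.mul_apply, Matrix.transpose_apply, Finset.sum_mul]
        rw [Finset.sum_comm]
        refine Finset.sum_congr rfl fun I _ => Finset.sum_congr rfl fun J _ => ?_
        ring
      rw [this, hzero]
      rfl
    have hMu := hinv X hX
    have hMl : M⁻¹ * M = 1 := Matrix.nonsing_inv_mul M hMu
    have hMr : Mᵀ * Mᵀ⁻¹ = 1 := Matrix.mul_nonsing_inv _ (by rwa [Matrix.det_transpose])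
    have hA0 : A = 0 := by
      calc A = M⁻¹ * M * A * (Mᵀ * Mᵀ⁻¹) := by rw [hMl, hMr, Matrix.one_mul, Matrix.mul_one]
        _ = M⁻¹ * (M * A * Mᵀ) * Mᵀ⁻¹ := by simp only [Matrix.mul_assoc]
        _ = 0 := by rw [hMAMt, Matrix.mul_zero, Matrix.zero_mul]
    intro I J
    have := congrFun (congrFun hA0 I) J
    simp only [hA, Matrix.of_apply, Matrix.zero_apply, sub_eq_zero] at this
    exact this
  refine ⟨key, ?_⟩
  intro X₀ hX₀
  refine ⟨Udom, hopen.mem_nhds hX₀, fun Y => (2⁻¹ : ℂ) * ∑ I, Y I * F I Y, ?_⟩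
  intro X hX J
  have hD : ∀ I, HasFDerivAt (F I) (fderiv ℂ (F I) X) X :=
    fun I => ((hdiff I).differentiableAt (hopen.mem_nhds hX)).hasFDerivAt
  have hterm : ∀ I, HasFDerivAt (fun Y : Fin (n+1) → ℂ => Y I * F I Y)
      (X I • fderiv ℂ (F I) X +
        F I X • (ContinuousLinearMap.proj I : (Fin (n+1) → ℂ) →L[ℂ] ℂ)) X := by
    intro I
    exact ((ContinuousLinearMap.proj I).hasFDerivAt (x := X)).mul (hD I)
  have hsum : HasFDerivAt (fun Y : Fin (n+1) → ℂ => ∑ I, Y I * F I Y)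
      (∑ I, (X I • fderiv ℂ (F I) X +
        F I X • (ContinuousLinearMap.proj I : (Fin (n+1) → ℂ) →L[ℂ] ℂ))) X :=
    HasFDerivAt.fun_sum fun I _ => hterm I
  have hF : HasFDerivAt (fun Y : Fin (n+1) → ℂ => (2⁻¹ : ℂ) * ∑ I, Y I * F I Y)
      ((2⁻¹ : ℂ) • ∑ I, (X I • fderiv ℂ (F I) X +
        F I X • (ContinuousLinearMap.proj I : (Fin (n+1) → ℂ) →L[ℂ] ℂ))) X :=
    hsum.const_mul _
  rw [hF.fderiv]
  simp only [ContinuousLinearMap.smul_apply, ContinuousLinearMap.sum_apply,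
    ContinuousLinearMap.add_apply, ContinuousLinearMap.proj_apply, smul_eq_mul]
  have hswap : ∀ I, fderiv ℂ (F I) X (Pi.single J 1) = fderiv ℂ (F J) X (Pi.single I 1) :=
    fun I => key X hX J I
  have h1 : ∑ I, X I * fderiv ℂ (F J) X (Pi.single I 1) = F J X := (hhom X hX J).symm
  have h2 : ∑ I, F I X * (Pi.single J 1 : Fin (n+1) → ℂ) I = F J X := by
    simp [Pi.single_apply, mul_ite]
  calc (2⁻¹ : ℂ) * ∑ I, (X I * fderiv ℂ (F I) X (Pi.single J 1) + F I X * (Pi.single J 1 : Fin (n+1) → ℂ) I)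
      = (2⁻¹ : ℂ) * ((∑ I, X I * fderiv ℂ (F J) X (Pi.single I 1))
        + ∑ I, F I X * (Pi.single J 1 : Fin (n+1) → ℂ) I) := by
        rw [← Finset.sum_add_distrib]
        congr 1
        exact Finset.sum_congr rfl fun I _ => by rw [hswap]
    _ = F J X := by rw [h1, h2]; ring
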